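/- For an Ising model on a graph, if i is a neighbor of k, the Dobrushin coefficient satisfies C_{ki} ≤ tanh(|J_{ik}|). Consequently, if the graph has maximum degree d and all |J_{ij}| ≤ β with d·tanh(β) < 1, then the Dobrushin condition c = max_k Σ_i C_{ki} < 1 holds. -/

import Mathlib

open Finset

/-- The two-point spin space `{-1, +1}`. -/
abbrev Spin : Type := ({-1, 1} : Finset ℤ)

/-- Energy of an Ising configuration. -/
noncomputable def isingEnergy {V : Type*} [Fintype V] (G : SimpleGraph V) [DecidableRel G.Adj]
    (J : V → V → ℝ) (h : V → ℝ) (x : V → Spin) : ℝ :=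
  (1 / 2) * ∑ i, ∑ j, (if G.Adj i j then J i j * ((x i : ℤ) : ℝ) * ((x j : ℤ) : ℝ) else 0)
    + ∑ i, h i * ((x i : ℤ) : ℝ)

/-- The Ising model probability measure. -/
noncomputable def isingMu {V : Type*} [Fintype V] [DecidableEq V] (G : SimpleGraph V)
    [DecidableRel G.Adj] (J : V → V → ℝ) (h : V → ℝ) (x : V → Spin) : ℝ :=
  Real.exp (isingEnergy G J h x) / ∑ y : V → Spin, Real.exp (isingEnergy G J h y)

/-- Conditional distribution of coordinate `i` given all other coordinates of `x`. -/
noncomputable def condDist {I S : Type*} [Fintype I] [DecidableEq I] [Fintype S]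
    (μ : (I → S) → ℝ) (i : I) (x : I → S) (s : S) : ℝ :=
  μ (Function.update x i s) / ∑ s' : S, μ (Function.update x i s')

/-- Total variation distance between two distributions on a finite space. -/
noncomputable def tvDist {S : Type*} [Fintype S] (p q : S → ℝ) : ℝ :=
  (1 / 2) * ∑ s : S, |p s - q s|

/-- The Dobrushin interaction matrix of `μ`. -/
noncomputable def dobrushinC {I S : Type*} [Fintype I] [DecidableEq I] [Fintype S]
    (μ : (I → S) → ℝ) (i j : I) : ℝ :=
  (1 / 2) * ⨆ q : {q : (I → S) × (I → S) // ∀ k, k ≠ j → q.1 k = q.2 k},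
    tvDist (condDist μ i q.1.1) (condDist μ i q.1.2)

/-! ### Auxiliary analytic lemmas about `tanh` -/

lemma tanh_sub_eq' (a b : ℝ) :
    Real.tanh a - Real.tanh b = Real.sinh (a - b) / (Real.cosh a * Real.cosh b) := by
  rw [Real.tanh_eq_sinh_div_cosh, Real.tanh_eq_sinh_div_cosh, Real.sinh_sub]
  field_simp

lemma tanh_mono' {a b : ℝ} (hab : a ≤ b) : Real.tanh a ≤ Real.tanh b := by
  have h := tanh_sub_eq' b a
  have h2 : 0 ≤ Real.sinh (b - a) / (Real.cosh b * Real.cosh a) :=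
    div_nonneg (Real.sinh_nonneg_iff.2 (by linarith))
      (le_of_lt (mul_pos (Real.cosh_pos b) (Real.cosh_pos a)))
  linarith

lemma tanh_nonneg' {a : ℝ} (ha : 0 ≤ a) : 0 ≤ Real.tanh a := by
  simpa using tanh_mono' ha

lemma abs_tanh_sub_le' (a b : ℝ) :
    |Real.tanh a - Real.tanh b| ≤ 2 * Real.tanh (|a - b| / 2) := by
  wlog hab : b ≤ a generalizing a b
  · rw [abs_sub_comm, abs_sub_comm a b]; exact this b a (by linarith)
  set c := (a - b) / 2 with hc
  have hc0 : 0 ≤ c := div_nonneg (by linarith) (by norm_num)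
  have habs : |a - b| = 2 * c := by rw [abs_of_nonneg (by linarith)]; ring
  rw [habs, abs_of_nonneg (by have := tanh_mono' hab; linarith)]
  have key : Real.tanh a - Real.tanh b = Real.sinh (2 * c) / (Real.cosh a * Real.cosh b) := by
    rw [tanh_sub_eq']; congr 1; rw [hc]; ring
  have hden : Real.cosh c ^ 2 ≤ Real.cosh a * Real.cosh b := by
    have h1 : Real.cosh a * Real.cosh b = (Real.cosh (a + b) + Real.cosh (a - b)) / 2 := by
      rw [Real.cosh_add, Real.cosh_sub]; ring
    have h2 : Real.cosh (a - b) = 2 * Real.cosh c ^ 2 - 1 := by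
      have : a - b = 2 * c := by rw [hc]; ring
      rw [this, Real.cosh_two_mul, Real.cosh_sq]; ring
    have := Real.one_le_cosh (a + b)
    nlinarith
  have hs : 0 ≤ Real.sinh (2 * c) := Real.sinh_nonneg_iff.2 (by linarith)
  have h3 : Real.sinh (2 * c) / (Real.cosh a * Real.cosh b) ≤ Real.sinh (2 * c) / Real.cosh c ^ 2 :=
    div_le_div_of_nonneg_left hs (by positivity) hden
  have h4 : Real.sinh (2 * c) / Real.cosh c ^ 2 = 2 * Real.tanh (2 * c / 2) := by
    rw [show (2:ℝ) * c / 2 = c by ring, Real.sinh_two_mul, Real.tanh_eq_sinh_div_cosh]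
    have := (Real.cosh_pos c).ne'
    field_simp
  rw [mul_div_assoc] at h4 ⊢
  linarith [key ▸ h3, h4 ▸ le_refl (Real.sinh (2*c) / Real.cosh c ^ 2)]

/-! ### Spin space basics -/

def spinUp : Spin := ⟨1, by decide⟩
def spinDown : Spin := ⟨-1, by decide⟩
instance : Nonempty Spin := ⟨spinUp⟩

lemma spin_univ : (Finset.univ : Finset Spin) = {spinDown, spinUp} := by decide

lemma spin_sum (f : Spin → ℝ) : ∑ s : Spin, f s = f spinDown + f spinUp := by
  rw [spin_univ, Finset.sum_pair (by decide)]

lemma spin_cases (s : Spin) : s = spinDown ∨ s = spinUp := by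
  rcases s with ⟨v, hv⟩
  fin_cases hv <;> simp [spinDown, spinUp]

lemma spin_coe_up : ((spinUp : ℤ) : ℝ) = 1 := by norm_num [spinUp]
lemma spin_coe_down : ((spinDown : ℤ) : ℝ) = -1 := by norm_num [spinDown]

lemma spin_coe_abs (s : Spin) : |((s : ℤ) : ℝ)| = 1 := by
  rcases spin_cases s with hs | hs <;> subst hs
  · rw [spin_coe_down]; norm_num
  · rw [spin_coe_up]; norm_num

/-! ### The local field -/

noncomputable def localField {V : Type*} [Fintype V] (G : SimpleGraph V) [DecidableRel G.Adj]
    (J : V → V → ℝ) (h : V → ℝ) (k : V) (x : V → Spin) : ℝ :=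
  h k + ∑ j, (if G.Adj k j then J k j * ((x j : ℤ) : ℝ) else 0)

section Model
variable {V : Type*} [Fintype V] [DecidableEq V] (G : SimpleGraph V) [DecidableRel G.Adj]
  (J : V → V → ℝ) (h : V → ℝ)

lemma energy_up_sub_down (hJs : ∀ i j, J i j = J j i) (k : V) (x : V → Spin) :
    isingEnergy G J h (Function.update x k spinUp)
      - isingEnergy G J h (Function.update x k spinDown) = 2 * localField G J h k x := by
  classical
  set u := Function.update x k spinUp with hu
  set d := Function.update x k spinDown with hd
  have hup : ∀ i, i ≠ k → u i = x i := fun i hi => Function.update_of_ne hi _ _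
  have hdp : ∀ i, i ≠ k → d i = x i := fun i hi => Function.update_of_ne hi _ _
  have huk : ((u k : ℤ) : ℝ) = 1 := by rw [hu, Function.update_self]; norm_num [spinUp]
  have hdk : ((d k : ℤ) : ℝ) = -1 := by rw [hd, Function.update_self]; norm_num [spinDown]
  have hptwise : ∀ i j,
      (if G.Adj i j then J i j * ((u i : ℤ) : ℝ) * ((u j : ℤ) : ℝ) else 0)
      - (if G.Adj i j then J i j * ((d i : ℤ) : ℝ) * ((d j : ℤ) : ℝ) else 0)
      = (if i = k then (if G.Adj k j then 2 * J k j * ((x j : ℤ) : ℝ) else 0) else 0)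
      + (if j = k then (if G.Adj i k then 2 * J i k * ((x i : ℤ) : ℝ) else 0) else 0) := by
    intro i j
    by_cases hik : i = k <;> by_cases hjk : j = k
    · subst hik; subst hjk; simp [G.irrefl]
    · subst hik
      rw [hup j hjk, hdp j hjk]
      simp [hjk, huk, hdk]
      split_ifs <;> ring
    · subst hjk
      rw [hup i hik, hdp i hik]
      simp [hik, huk, hdk]
      split_ifs <;> ring
    · rw [hup i hik, hdp i hik, hup j hjk, hdp j hjk]
      simp [hik, hjk]
  have hdouble : ∑ i, ∑ j, (if G.Adj i j then J i j * ((u i : ℤ) : ℝ) * ((u j : ℤ) : ℝ) else 0)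
      - ∑ i, ∑ j, (if G.Adj i j then J i j * ((d i : ℤ) : ℝ) * ((d j : ℤ) : ℝ) else 0)
      = 4 * ∑ j, (if G.Adj k j then J k j * ((x j : ℤ) : ℝ) else 0) := by
    rw [← Finset.sum_sub_distrib]
    simp_rw [← Finset.sum_sub_distrib, hptwise, Finset.sum_add_distrib]
    have A : ∀ (F : V → ℝ), (∑ i : V, ∑ j : V, (if i = k then F j else 0)) = ∑ j, F j := by
      intro F
      rw [Finset.sum_comm]
      simp
    have B : ∀ (F : V → ℝ), (∑ i : V, ∑ j : V, (if j = k then F i else 0)) = ∑ i, F i := by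
      intro F
      simp
    rw [A (fun j => if G.Adj k j then 2 * J k j * ((x j : ℤ) : ℝ) else 0),
        B (fun i => if G.Adj i k then 2 * J i k * ((x i : ℤ) : ℝ) else 0)]
    have C : (∑ i : V, (if G.Adj i k then 2 * J i k * ((x i : ℤ) : ℝ) else 0))
        = ∑ i : V, (if G.Adj k i then 2 * J k i * ((x i : ℤ) : ℝ) else 0) := by
      refine Finset.sum_congr rfl fun i _ => ?_
      rw [hJs i k, if_congr (G.adj_comm i k) rfl rfl]
    rw [C, ← Finset.sum_add_distrib, Finset.mul_sum]
    refine Finset.sum_congr rfl fun j _ => ?_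
    split_ifs <;> ring
  have hlin : (∑ i, h i * ((u i : ℤ) : ℝ)) - (∑ i, h i * ((d i : ℤ) : ℝ)) = 2 * h k := by
    rw [← Finset.sum_sub_distrib]
    rw [Finset.sum_eq_single k]
    · rw [huk, hdk]; ring
    · intro i _ hik
      rw [hup i hik, hdp i hik]; ring
    · intro hk; exact absurd (Finset.mem_univ k) hk
  unfold isingEnergy
  unfold localField
  linarith [hdouble, hlin]

lemma energy_update_eq (hJs : ∀ i j, J i j = J j i) (k : V) (x : V → Spin) (s : Spin) :
    isingEnergy G J h (Function.update x k s)
      = (isingEnergy G J h (Function.update x k spinUp) - localField G J h k x)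
        + ((s : ℤ) : ℝ) * localField G J h k x := by
  rcases spin_cases s with hs | hs <;> subst hs
  · have := energy_up_sub_down G J h hJs k x
    rw [spin_coe_down]; linarith
  · rw [spin_coe_up]; ring

lemma condDist_ising (hJs : ∀ i j, J i j = J j i) (k : V) (x : V → Spin) (s : Spin) :
    condDist (isingMu G J h) k x s
      = Real.exp (((s : ℤ) : ℝ) * localField G J h k x)
        / (Real.exp (localField G J h k x) + Real.exp (-localField G J h k x)) := by
  set L := localField G J h k x with hL
  set C := isingEnergy G J h (Function.update x k spinUp) - L with hC
  set Z := ∑ y : V → Spin, Real.exp (isingEnergy G J h y) with hZdef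
  have hZ : (0 : ℝ) < Z :=
    Finset.sum_pos (fun y _ => Real.exp_pos _) Finset.univ_nonempty
  have hE : ∀ s' : Spin, isingEnergy G J h (Function.update x k s') = C + ((s' : ℤ) : ℝ) * L := by
    intro s'; rw [hC]; exact energy_update_eq G J h hJs k x s'
  unfold condDist isingMu
  rw [spin_sum (fun s' => Real.exp (isingEnergy G J h (Function.update x k s')) / Z)]
  rw [hE s, hE spinUp, hE spinDown, spin_coe_up, spin_coe_down]
  rw [Real.exp_add, Real.exp_add, Real.exp_add]
  have he1 : Real.exp (-1 * L) = Real.exp (-L) := by norm_num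
  have he2 : Real.exp (1 * L) = Real.exp L := by norm_num
  rw [he1, he2]
  have hpos : (0 : ℝ) < Real.exp L + Real.exp (-L) :=
    add_pos (Real.exp_pos _) (Real.exp_pos _)
  have hCpos := Real.exp_pos C
  rw [← hZdef, ← add_div, div_div_div_cancel_right₀ hZ.ne', ← mul_add,
    mul_div_mul_left _ _ hCpos.ne', add_comm (Real.exp (-L))]

lemma condDist_up (hJs : ∀ i j, J i j = J j i) (k : V) (x : V → Spin) :
    condDist (isingMu G J h) k x spinUp = (1 + Real.tanh (localField G J h k x)) / 2 := by
  rw [condDist_ising G J h hJs, spin_coe_up, one_mul]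
  set L := localField G J h k x
  rw [Real.tanh_eq_sinh_div_cosh, Real.sinh_eq, Real.cosh_eq]
  have h1 : (0 : ℝ) < Real.exp L + Real.exp (-L) := add_pos (Real.exp_pos _) (Real.exp_pos _)
  field_simp
  ring

lemma condDist_down (hJs : ∀ i j, J i j = J j i) (k : V) (x : V → Spin) :
    condDist (isingMu G J h) k x spinDown = (1 - Real.tanh (localField G J h k x)) / 2 := by
  rw [condDist_ising G J h hJs, spin_coe_down]
  set L := localField G J h k x
  rw [Real.tanh_eq_sinh_div_cosh, Real.sinh_eq, Real.cosh_eq, show (-1 : ℝ) * L = -L by ring]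
  have h1 : (0 : ℝ) < Real.exp L + Real.exp (-L) := add_pos (Real.exp_pos _) (Real.exp_pos _)
  field_simp
  ring

lemma tv_ising (hJs : ∀ i j, J i j = J j i) (k : V) (x y : V → Spin) :
    tvDist (condDist (isingMu G J h) k x) (condDist (isingMu G J h) k y)
      = |Real.tanh (localField G J h k x) - Real.tanh (localField G J h k y)| / 2 := by
  unfold tvDist
  rw [spin_sum (fun s => |condDist (isingMu G J h) k x s - condDist (isingMu G J h) k y s|)]
  rw [condDist_up G J h hJs, condDist_up G J h hJs, condDist_down G J h hJs,
    condDist_down G J h hJs]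
  set tx := Real.tanh (localField G J h k x)
  set ty := Real.tanh (localField G J h k y)
  have e1 : |(1 - tx) / 2 - (1 - ty) / 2| = |tx - ty| / 2 := by
    rw [show (1 - tx) / 2 - (1 - ty) / 2 = -((tx - ty) / 2) by ring, abs_neg, abs_div]
    norm_num
  have e2 : |(1 + tx) / 2 - (1 + ty) / 2| = |tx - ty| / 2 := by
    rw [show (1 + tx) / 2 - (1 + ty) / 2 = (tx - ty) / 2 by ring, abs_div]
    norm_num
  rw [e1, e2]; ring

lemma localField_diff (k i : V) (x y : V → Spin) (hxy : ∀ j, j ≠ i → x j = y j) :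
    localField G J h k x - localField G J h k y
      = (if G.Adj k i then J k i * (((x i : ℤ) : ℝ) - ((y i : ℤ) : ℝ)) else 0) := by
  unfold localField
  have : (∑ j, (if G.Adj k j then J k j * ((x j : ℤ) : ℝ) else 0))
      - (∑ j, (if G.Adj k j then J k j * ((y j : ℤ) : ℝ) else 0))
      = (if G.Adj k i then J k i * (((x i : ℤ) : ℝ) - ((y i : ℤ) : ℝ)) else 0) := by
    rw [← Finset.sum_sub_distrib, Finset.sum_eq_single i]
    · split_ifs <;> ring
    · intro j _ hji
      rw [hxy j hji]; ring
    · intro hk; exact absurd (Finset.mem_univ i) hk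
  linarith

end Model

theorem ising_dobrushin_condition {V : Type*} [Fintype V] [DecidableEq V] [Nonempty V]
    (G : SimpleGraph V) [DecidableRel G.Adj] (J : V → V → ℝ) (h : V → ℝ)
    (hJsymm : ∀ i j, J i j = J j i) :
    (∀ k i, G.Adj i k → dobrushinC (isingMu G J h) k i ≤ Real.tanh |J i k|) ∧
    (∀ (d : ℕ) (β : ℝ), (∀ v, G.degree v ≤ d) → (∀ i j, |J i j| ≤ β) →
      (d : ℝ) * Real.tanh β < 1 →
      (Finset.univ.sup' Finset.univ_nonempty fun k => ∑ i, dobrushinC (isingMu G J h) k i)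
        < 1) := by
  classical
  -- general bound on the TV-distance between conditionals at `k` for a pair differing only at `i`
  have htv : ∀ (k i : V) (x y : V → Spin), (∀ j, j ≠ i → x j = y j) →
      tvDist (condDist (isingMu G J h) k x) (condDist (isingMu G J h) k y)
        ≤ if G.Adj k i then Real.tanh |J i k| else 0 := by
    intro k i x y hxy
    rw [tv_ising G J h hJsymm]
    have hdiff := localField_diff G J h k i x y hxy
    by_cases hadj : G.Adj k i
    · rw [if_pos hadj]
      rw [if_pos hadj] at hdiff
      have habs : |localField G J h k x - localField G J h k y| ≤ 2 * |J i k| := by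
        rw [hdiff, abs_mul]
        have : |((x i : ℤ) : ℝ) - ((y i : ℤ) : ℝ)| ≤ 2 := by
          calc |((x i : ℤ) : ℝ) - ((y i : ℤ) : ℝ)| ≤ |((x i : ℤ) : ℝ)| + |((y i : ℤ) : ℝ)| :=
                abs_sub _ _
          _ = 2 := by rw [spin_coe_abs, spin_coe_abs]; norm_num
        have hJ : |J k i| = |J i k| := by rw [hJsymm k i]
        calc |J k i| * |((x i : ℤ) : ℝ) - ((y i : ℤ) : ℝ)| ≤ |J k i| * 2 :=
              mul_le_mul_of_nonneg_left this (abs_nonneg _)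
        _ = 2 * |J i k| := by rw [hJ]; ring
      calc |Real.tanh (localField G J h k x) - Real.tanh (localField G J h k y)| / 2
          ≤ 2 * Real.tanh (|localField G J h k x - localField G J h k y| / 2) / 2 := by
            have := abs_tanh_sub_le' (localField G J h k x) (localField G J h k y)
            linarith
        _ = Real.tanh (|localField G J h k x - localField G J h k y| / 2) := by ring
        _ ≤ Real.tanh |J i k| := tanh_mono' (by linarith)
    · rw [if_neg hadj]
      rw [if_neg hadj] at hdiff
      have : localField G J h k x = localField G J h k y := by linarith
      rw [this, sub_self, abs_zero]
      norm_num
  -- the key pointwise bound on the Dobrushin coefficients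
  have hC : ∀ k i : V, dobrushinC (isingMu G J h) k i
      ≤ if G.Adj k i then Real.tanh |J i k| else 0 := by
    intro k i
    unfold dobrushinC
    have hb : (0 : ℝ) ≤ if G.Adj k i then Real.tanh |J i k| else 0 := by
      split_ifs
      · exact tanh_nonneg' (abs_nonneg _)
      · exact le_refl 0
    have hsup := Real.iSup_le
      (fun q : {q : (V → Spin) × (V → Spin) // ∀ j, j ≠ i → q.1 j = q.2 j} =>
        htv k i q.1.1 q.1.2 q.2) hb
    linarith [hsup, hb]
  constructor
  · intro k i hadj
    have := hC k i
    rw [if_pos (G.adj_comm i k |>.1 hadj)] at this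
    exact this
  · intro d β hdeg hβ hdtanh
    have hβ0 : 0 ≤ Real.tanh β := by
      obtain ⟨v⟩ := ‹Nonempty V›
      exact tanh_nonneg' (le_trans (abs_nonneg (J v v)) (hβ v v))
    rw [Finset.sup'_lt_iff]
    intro k _
    have hsum : (∑ i, dobrushinC (isingMu G J h) k i)
        ≤ ∑ i, (if G.Adj k i then Real.tanh β else 0) := by
      refine Finset.sum_le_sum fun i _ => ?_
      refine le_trans (hC k i) ?_
      split_ifs
      · exact tanh_mono' (hβ i k)
      · exact le_refl 0
    have hsum2 : (∑ i, (if G.Adj k i then Real.tanh β else 0))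
        = (G.degree k : ℝ) * Real.tanh β := by
      rw [← Finset.sum_filter, Finset.sum_const, ← SimpleGraph.neighborFinset_eq_filter,
        SimpleGraph.card_neighborFinset_eq_degree, nsmul_eq_mul]
    have hdegk : (G.degree k : ℝ) ≤ (d : ℝ) := Nat.cast_le.2 (hdeg k)
    calc (∑ i, dobrushinC (isingMu G J h) k i) ≤ (G.degree k : ℝ) * Real.tanh β := by
          rw [← hsum2]; exact hsum
      _ ≤ (d : ℝ) * Real.tanh β := mul_le_mul_of_nonneg_right hdegk hβ0
      _ < 1 := hdtanh
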